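/- Let λ > 0, μ > 0, ν > 0 and u < v. With P̄_1, P̄_2, Q̄_1, Q̄_2, R̄_2, S̄_2, γ̄_0 as in the two-point local time setting, put R̄_1 = P̄_1, S̄_1 = (1/λ)Q̄_1, B̄_0 = −γ̄_0 C_0, B̄_1 = S̄_1 C_0 − γ̄_0 R̄_1 C_0, B̄_2 = S̄_2 C_0 − γ̄_0 R̄_2 C_0, and let D = λ·[(√λ+μ)(√λ+ν) − μν·e^{2√λ(u−v)}]. Then for every x ∈ ℝ: the first entry of N(x)·B̄_0 equals −[μ(√λ + ν(1−e^{√λ(u−v)}))·e^{√λ(x−u)} + ν(√λ + μ(1−e^{√λ(u−v)}))·e^{√λ(x−v)}]/D; the first entry of N(x)·B̄_1 equals −[μ(√λ + ν(1−e^{√λ(u−v)}))·e^{√λ(u−x)} + ν(√λ + μ(1−e^{√λ(u−v)}))·e^{√λ(x−v)}]/D; and the first entry of N(x)·B̄_2 equals −[μ(√λ + ν(1−e^{√λ(u−v)}))·e^{√λ(u−x)} + ν(√λ + μ(1−e^{√λ(u−v)}))·e^{√λ(v−x)}]/D. In particular, for x ≤ u, u ≤ x ≤ v, x ≥ v respectively,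 (first entry of N(x)·B̄_i) + 1/λ equals (1/λ)·[1 − (μ(√λ + ν(1−e^{√λ(u−v)}))·e^{−√λ|x−u|} + ν(√λ + μ(1−e^{√λ(u−v)}))·e^{−√λ|x−v|})/((√λ+μ)(√λ+ν) − μν·e^{2√λ(u−v)})]. -/

import Mathlib

set_option maxHeartbeats 1000000


open Matrix Real

/-- The fundamental matrix `N(x)` associated with parameter `λ`:
`N(x) = ((e^{√λ x}, e^{−√λ x}), (√λ e^{√λ x}, −√λ e^{−√λ x}))`.
The matrix `M(x)` of the paper is `Nmat (λ+μ) x`. -/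
noncomputable def Nmat (lam x : ℝ) : Matrix (Fin 2) (Fin 2) ℝ :=
  !![Real.exp (Real.sqrt lam * x), Real.exp (-(Real.sqrt lam * x));
     Real.sqrt lam * Real.exp (Real.sqrt lam * x),
       -(Real.sqrt lam * Real.exp (-(Real.sqrt lam * x)))]

/-- explicit first entries of `N(x)B̄₀`, `N(x)B̄₁`, `N(x)B̄₂` in the
two-point local time setting, and the resulting unified formula for the iterated
Laplace transform of the pair of Brownian local times at `u` and `v`.
Here `a = μ(√λ + ν(1−e^{√λ(u−v)}))`, `b = ν(√λ + μ(1−e^{√λ(u−v)}))` and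
`D = λ[(√λ+μ)(√λ+ν) − μν e^{2√λ(u−v)}]`. -/
theorem statement19 (lam mu nu u v : ℝ) (hlam : 0 < lam) (hmu : 0 < mu) (hnu : 0 < nu)
    (huv : u < v)
    (P₁ P₂ Q₁ Q₂ R₁ R₂ S₁ S₂ : Matrix (Fin 2) (Fin 2) ℝ)
    (hP₁ : P₁ = (1 / Real.sqrt lam) •
      !![Real.sqrt lam + mu, mu * Real.exp (-(2 * (Real.sqrt lam * u)));
         -(mu * Real.exp (2 * (Real.sqrt lam * u))), Real.sqrt lam - mu])
    (hP₂ : P₂ = (1 / Real.sqrt lam) •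
      !![Real.sqrt lam + nu, nu * Real.exp (-(2 * (Real.sqrt lam * v)));
         -(nu * Real.exp (2 * (Real.sqrt lam * v))), Real.sqrt lam - nu])
    (hQ₁ : Q₁ = (mu / Real.sqrt lam) •
      !![Real.exp (-(Real.sqrt lam * u)), 0;
         -(Real.exp (Real.sqrt lam * u)), 0])
    (hQ₂ : Q₂ = (nu / Real.sqrt lam) •
      !![Real.exp (-(Real.sqrt lam * v)), 0;
         -(Real.exp (Real.sqrt lam * v)), 0])
    (hR₁ : R₁ = P₁) (hR₂ : R₂ = P₂ * P₁)
    (hS₁ : S₁ = (1 / lam) • Q₁) (hS₂ : S₂ = (1 / lam) • (Q₂ + P₂ * Q₁))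
    (γ₀ : ℝ) (hγ₀ : γ₀ = (S₂.mulVec ![1, 0]) 0 / (R₂.mulVec ![1, 0]) 0)
    (B₀ B₁ B₂ : Fin 2 → ℝ)
    (hB₀ : B₀ = -γ₀ • (![1, 0] : Fin 2 → ℝ))
    (hB₁ : B₁ = S₁.mulVec ![1, 0] - γ₀ • R₁.mulVec ![1, 0])
    (hB₂ : B₂ = S₂.mulVec ![1, 0] - γ₀ • R₂.mulVec ![1, 0])
    (a b D : ℝ)
    (ha : a = mu * (Real.sqrt lam + nu * (1 - Real.exp (Real.sqrt lam * (u - v)))))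
    (hb : b = nu * (Real.sqrt lam + mu * (1 - Real.exp (Real.sqrt lam * (u - v)))))
    (hD : D = lam * ((Real.sqrt lam + mu) * (Real.sqrt lam + nu) -
      mu * nu * Real.exp (2 * (Real.sqrt lam * (u - v))))) :
    (∀ x : ℝ, ((Nmat lam x).mulVec B₀) 0 =
      -((a * Real.exp (Real.sqrt lam * (x - u)) +
          b * Real.exp (Real.sqrt lam * (x - v))) / D)) ∧
    (∀ x : ℝ, ((Nmat lam x).mulVec B₁) 0 =
      -((a * Real.exp (Real.sqrt lam * (u - x)) +
          b * Real.exp (Real.sqrt lam * (x - v))) / D)) ∧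
    (∀ x : ℝ, ((Nmat lam x).mulVec B₂) 0 =
      -((a * Real.exp (Real.sqrt lam * (u - x)) +
          b * Real.exp (Real.sqrt lam * (v - x))) / D)) ∧
    (∀ x : ℝ,
      (x ≤ u → ((Nmat lam x).mulVec B₀) 0 + 1 / lam = (1 / lam) *
        (1 - (a * Real.exp (-(Real.sqrt lam * |x - u|)) +
            b * Real.exp (-(Real.sqrt lam * |x - v|))) /
          ((Real.sqrt lam + mu) * (Real.sqrt lam + nu) -
            mu * nu * Real.exp (2 * (Real.sqrt lam * (u - v)))))) ∧
      (u ≤ x → x ≤ v → ((Nmat lam x).mulVec B₁) 0 + 1 / lam = (1 / lam) *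
        (1 - (a * Real.exp (-(Real.sqrt lam * |x - u|)) +
            b * Real.exp (-(Real.sqrt lam * |x - v|))) /
          ((Real.sqrt lam + mu) * (Real.sqrt lam + nu) -
            mu * nu * Real.exp (2 * (Real.sqrt lam * (u - v)))))) ∧
      (v ≤ x → ((Nmat lam x).mulVec B₂) 0 + 1 / lam = (1 / lam) *
        (1 - (a * Real.exp (-(Real.sqrt lam * |x - u|)) +
            b * Real.exp (-(Real.sqrt lam * |x - v|))) /
          ((Real.sqrt lam + mu) * (Real.sqrt lam + nu) -
            mu * nu * Real.exp (2 * (Real.sqrt lam * (u - v))))))) := by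

  subst hP₁ hP₂ hQ₁ hQ₂ hR₁ hR₂ hS₁ hS₂ hB₀ hB₁ hB₂ ha hb hD
  set s := Real.sqrt lam with hsdef
  have hs : 0 < s := Real.sqrt_pos.mpr hlam
  have hss : s * s = lam := Real.mul_self_sqrt hlam.le
  have heu : (0:ℝ) < Real.exp (s*u) := Real.exp_pos _
  have hev : (0:ℝ) < Real.exp (s*v) := Real.exp_pos _
  have heuv : Real.exp (s*u) < Real.exp (s*v) := by
    apply Real.exp_lt_exp.mpr; nlinarith
  have hKp : (0:ℝ) < (s+mu)*(s+nu)*(Real.exp (s*v)*Real.exp (s*v))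
      - mu*nu*(Real.exp (s*u)*Real.exp (s*u)) := by
    have h1 : Real.exp (s*u)*Real.exp (s*u) < Real.exp (s*v)*Real.exp (s*v) := by nlinarith
    have h2 : mu*nu < (s+mu)*(s+nu) := by nlinarith
    nlinarith [mul_pos hmu hnu, mul_pos heu heu, mul_pos (mul_pos hmu hnu) (mul_pos heu heu)]
  have hγval : γ₀ = (s*nu*(Real.exp (s*u)*Real.exp (s*v))
        + mu*(s+nu)*(Real.exp (s*v)*Real.exp (s*v))
        - mu*nu*(Real.exp (s*u)*Real.exp (s*u)))
      / (lam * ((s+mu)*(s+nu)*(Real.exp (s*v)*Real.exp (s*v))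
        - mu*nu*(Real.exp (s*u)*Real.exp (s*u))) * Real.exp (s*u)) := by
    rw [hγ₀]
    simp only [Matrix.mulVec, Matrix.mul_apply, Matrix.smul_apply, Matrix.add_apply,
      dotProduct, Fin.sum_univ_two, Matrix.cons_val', Matrix.cons_val_zero,
      Matrix.cons_val_one, Matrix.head_cons, Matrix.empty_val',
      Matrix.cons_val_fin_one, Matrix.head_fin_const, smul_eq_mul,
      Matrix.cons_mulVec, Matrix.cons_dotProduct, Matrix.dotProduct_of_isEmpty, Matrix.of_apply]
    simp only [show -(2*(s*u)) = -(s*u) + -(s*u) by ring,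
      show (2:ℝ)*(s*u) = s*u + s*u by ring,
      show -(2*(s*v)) = -(s*v) + -(s*v) by ring,
      show (2:ℝ)*(s*v) = s*v + s*v by ring,
      Real.exp_add, Real.exp_neg]
    rw [div_eq_div_iff]
    · field_simp
      ring
    · field_simp
      intro h
      simp only [mul_zero, add_zero, div_eq_zero_iff] at h
      rcases h with h | h
      · nlinarith [mul_pos (pow_pos heu 2) hKp]
      · have : 0 < s ^ 2 * rexp (s * v) ^ 2 * rexp (s * u) ^ 2 := by positivity
        linarith
    · positivity
  have key : ∀ x : ℝ, ((Nmat lam x).mulVec (-γ₀ • (![1, 0] : Fin 2 → ℝ))) 0 =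
      -((mu * (s + nu * (1 - Real.exp (s * (u - v)))) * Real.exp (s * (x - u)) +
          nu * (s + mu * (1 - Real.exp (s * (u - v)))) * Real.exp (s * (x - v))) /
        (lam * ((s + mu) * (s + nu) - mu * nu * Real.exp (2 * (s * (u - v)))))) := by
    intro x
    rw [hγval]
    simp only [Nmat, Matrix.mulVec, dotProduct, Fin.sum_univ_two, Matrix.cons_val',
      Matrix.cons_val_zero, Matrix.cons_val_one, Matrix.head_cons, Matrix.empty_val',
      Matrix.cons_val_fin_one, Matrix.head_fin_const, Pi.smul_apply, smul_eq_mul,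
      Matrix.of_apply]
    rw [show (s+mu)*(s+nu) - mu*nu*Real.exp (2*(s*(u-v))) =
        ((s+mu)*(s+nu)*(Real.exp (s*v)*Real.exp (s*v))
          - mu*nu*(Real.exp (s*u)*Real.exp (s*u)))/(Real.exp (s*v)*Real.exp (s*v)) from by
      rw [show (2:ℝ)*(s*(u-v)) = s*u+s*u+ -(s*v)+ -(s*v) by ring, Real.exp_add,
        Real.exp_add, Real.exp_add, Real.exp_neg]
      field_simp]
    simp only [show s * (u - v) = s*u + -(s*v) by ring,
      show (2:ℝ) * (s * (u - v)) = s*u + s*u + -(s*v) + -(s*v) by ring,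
      show s * (x - u) = s*x + -(s*u) by ring,
      show s * (x - v) = s*x + -(s*v) by ring,
      show -(√lam * x) = -(s*x) by rw [hsdef],
      show √lam * x = s*x by rw [hsdef],
      Real.exp_add, Real.exp_neg]
    generalize hK : (s+mu)*(s+nu)*(Real.exp (s*v)*Real.exp (s*v))
        - mu*nu*(Real.exp (s*u)*Real.exp (s*u)) = K at *
    field_simp [hKp.ne', hlam.ne', hs.ne']
    subst hK
    ring
  have key1 : ∀ x : ℝ, ((Nmat lam x).mulVec
      (((1 / lam) • ((mu / s) •
          !![Real.exp (-(s * u)), 0; -(Real.exp (s * u)), 0])).mulVec ![1, 0]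
        - γ₀ • (((1 / s) •
          !![s + mu, mu * Real.exp (-(2 * (s * u))); -(mu * Real.exp (2 * (s * u))), s - mu]).mulVec ![1, 0]))) 0 =
      -((mu * (s + nu * (1 - Real.exp (s * (u - v)))) * Real.exp (s * (u - x)) +
          nu * (s + mu * (1 - Real.exp (s * (u - v)))) * Real.exp (s * (x - v))) /
        (lam * ((s + mu) * (s + nu) - mu * nu * Real.exp (2 * (s * (u - v)))))) := by
    intro x
    rw [hγval]
    simp only [Nmat, Matrix.mulVec, dotProduct, Fin.sum_univ_two, Matrix.cons_val',
      Matrix.cons_val_zero, Matrix.cons_val_one, Matrix.head_cons, Matrix.empty_val',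
      Matrix.cons_val_fin_one, Matrix.head_fin_const, Pi.smul_apply, smul_eq_mul,
      Matrix.of_apply, Matrix.smul_apply, Pi.sub_apply]
    rw [show (s+mu)*(s+nu) - mu*nu*Real.exp (2*(s*(u-v))) =
        ((s+mu)*(s+nu)*(Real.exp (s*v)*Real.exp (s*v))
          - mu*nu*(Real.exp (s*u)*Real.exp (s*u)))/(Real.exp (s*v)*Real.exp (s*v)) from by
      rw [show (2:ℝ)*(s*(u-v)) = s*u+s*u+ -(s*v)+ -(s*v) by ring, Real.exp_add,
        Real.exp_add, Real.exp_add, Real.exp_neg]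
      field_simp]
    simp only [show s * (u - v) = s*u + -(s*v) by ring,
      show (2:ℝ) * (s * (u - v)) = s*u + s*u + -(s*v) + -(s*v) by ring,
      show s * (u - x) = s*u + -(s*x) by ring,
      show s * (x - v) = s*x + -(s*v) by ring,
      show -(2*(s*u)) = -(s*u) + -(s*u) by ring,
      show (2:ℝ)*(s*u) = s*u + s*u by ring,
      show -(√lam * x) = -(s*x) by rw [hsdef],
      show √lam * x = s*x by rw [hsdef],
      Real.exp_add, Real.exp_neg]
    generalize hK : (s+mu)*(s+nu)*(Real.exp (s*v)*Real.exp (s*v))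
        - mu*nu*(Real.exp (s*u)*Real.exp (s*u)) = K at *
    field_simp [hKp.ne', hlam.ne', hs.ne']
    subst hK
    ring
  have key2 : ∀ x : ℝ, ((Nmat lam x).mulVec
      (((1 / lam) • ((nu / s) • !![Real.exp (-(s * v)), 0; -(Real.exp (s * v)), 0]
          + ((1 / s) • !![s + nu, nu * Real.exp (-(2 * (s * v))); -(nu * Real.exp (2 * (s * v))), s - nu])
            * ((mu / s) • !![Real.exp (-(s * u)), 0; -(Real.exp (s * u)), 0]))).mulVec ![1, 0]
        - γ₀ • ((((1 / s) • !![s + nu, nu * Real.exp (-(2 * (s * v))); -(nu * Real.exp (2 * (s * v))), s - nu])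
            * ((1 / s) • !![s + mu, mu * Real.exp (-(2 * (s * u))); -(mu * Real.exp (2 * (s * u))), s - mu])).mulVec ![1, 0]))) 0 =
      -((mu * (s + nu * (1 - Real.exp (s * (u - v)))) * Real.exp (s * (u - x)) +
          nu * (s + mu * (1 - Real.exp (s * (u - v)))) * Real.exp (s * (v - x))) /
        (lam * ((s + mu) * (s + nu) - mu * nu * Real.exp (2 * (s * (u - v)))))) := by
    intro x
    rw [hγval]
    simp only [Nmat, Matrix.mulVec, dotProduct, Fin.sum_univ_two, Matrix.cons_val',
      Matrix.cons_val_zero, Matrix.cons_val_one, Matrix.head_cons, Matrix.empty_val',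
      Matrix.cons_val_fin_one, Matrix.head_fin_const, Pi.smul_apply, smul_eq_mul,
      Matrix.of_apply, Matrix.smul_apply, Pi.sub_apply, Matrix.add_apply,
      Matrix.mul_apply]
    rw [show (s+mu)*(s+nu) - mu*nu*Real.exp (2*(s*(u-v))) =
        ((s+mu)*(s+nu)*(Real.exp (s*v)*Real.exp (s*v))
          - mu*nu*(Real.exp (s*u)*Real.exp (s*u)))/(Real.exp (s*v)*Real.exp (s*v)) from by
      rw [show (2:ℝ)*(s*(u-v)) = s*u+s*u+ -(s*v)+ -(s*v) by ring, Real.exp_add,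
        Real.exp_add, Real.exp_add, Real.exp_neg]
      field_simp]
    simp only [show s * (u - v) = s*u + -(s*v) by ring,
      show (2:ℝ) * (s * (u - v)) = s*u + s*u + -(s*v) + -(s*v) by ring,
      show s * (u - x) = s*u + -(s*x) by ring,
      show s * (v - x) = s*v + -(s*x) by ring,
      show -(2*(s*u)) = -(s*u) + -(s*u) by ring,
      show (2:ℝ)*(s*u) = s*u + s*u by ring,
      show -(2*(s*v)) = -(s*v) + -(s*v) by ring,
      show (2:ℝ)*(s*v) = s*v + s*v by ring,
      show -(√lam * x) = -(s*x) by rw [hsdef],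
      show √lam * x = s*x by rw [hsdef],
      Real.exp_add, Real.exp_neg]
    generalize hK : (s+mu)*(s+nu)*(Real.exp (s*v)*Real.exp (s*v))
        - mu*nu*(Real.exp (s*u)*Real.exp (s*u)) = K at *
    field_simp [hKp.ne', hlam.ne', hs.ne']
    subst hK
    ring
  have hKpos : 0 < (s+mu)*(s+nu) - mu*nu*Real.exp (2*(s*(u-v))) := by
    rw [show (s+mu)*(s+nu) - mu*nu*Real.exp (2*(s*(u-v))) =
        ((s+mu)*(s+nu)*(Real.exp (s*v)*Real.exp (s*v))
          - mu*nu*(Real.exp (s*u)*Real.exp (s*u)))/(Real.exp (s*v)*Real.exp (s*v)) from by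
      rw [show (2:ℝ)*(s*(u-v)) = s*u+s*u+ -(s*v)+ -(s*v) by ring, Real.exp_add,
        Real.exp_add, Real.exp_add, Real.exp_neg]
      field_simp]
    exact div_pos hKp (by positivity)
  refine ⟨key, key1, key2, fun x => ⟨fun hxu => ?_, fun hux hxv => ?_, fun hvx => ?_⟩⟩
  · rw [abs_of_nonpos (by linarith : x - u ≤ 0), abs_of_nonpos (by linarith : x - v ≤ 0),
      show -(s * -(x-u)) = s*(x-u) by ring, show -(s * -(x-v)) = s*(x-v) by ring, key x]
    field_simp [hKpos.ne', hlam.ne']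
    ring
  · rw [abs_of_nonneg (by linarith : 0 ≤ x - u), abs_of_nonpos (by linarith : x - v ≤ 0),
      show -(s * (x-u)) = s*(u-x) by ring, show -(s * -(x-v)) = s*(x-v) by ring, key1 x]
    field_simp [hKpos.ne', hlam.ne']
    ring
  · rw [abs_of_nonneg (by linarith : 0 ≤ x - u), abs_of_nonneg (by linarith : 0 ≤ x - v),
      show -(s * (x-u)) = s*(u-x) by ring, show -(s * (x-v)) = s*(v-x) by ring, key2 x]
    field_simp [hKpos.ne', hlam.ne']
    ring
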